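/- Let α ∈ (0,1). There exists a constant C > 0 depending only on α such that the following holds for all ρ ∈ (0,1] and all h ∈ (0,1). Set N_0 := ⌈(ρ/4) log(1/h)⌉ and consider words w = w_0 w_1 … w_{8N_0−1} with letters w_j ∈ {1,2}. Let X be the set of such words of length 8N_0 with the property that for every ℓ ∈ {0,1,…,7}, the block w_{ℓN_0} … w_{(ℓ+1)N_0−1} of length N_0 contains strictly fewer than αN_0 letters equal to 1. Then the number of elements of X satisfies #X ≤ C · h^{−4√α}. -/

import Mathlib

open Classical
open Finset

private lemma log_le_div_e {x : ℝ} (hx : 0 < x) : Real.log x ≤ x / Real.exp 1 := by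
  have h := Real.log_le_sub_one_of_pos (show 0 < x / Real.exp 1 by positivity)
  rw [Real.log_div (ne_of_gt hx) (by positivity), Real.log_exp] at h
  linarith

private lemma entropy_le (α : ℝ) (hα0 : 0 < α) (hα : α ≤ 1/2) :
    -((1-α) * Real.log (1-α)) - α * Real.log α ≤ 2 * Real.sqrt α := by
  have h1 : 0 < 1 - α := by linarith
  have hs0 : 0 < Real.sqrt α := Real.sqrt_pos.2 hα0
  have hs2 : Real.sqrt α * Real.sqrt α = α := Real.mul_self_sqrt hα0.le
  have hb1 : -((1-α) * Real.log (1-α)) ≤ α := by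
    have h3 := Real.log_le_sub_one_of_pos (inv_pos.2 h1)
    rw [Real.log_inv] at h3
    have h4 : (1-α)⁻¹ - 1 = α/(1-α) := by field_simp; ring
    have h2 : -Real.log (1-α) ≤ α / (1-α) := by linarith
    have h5 : (1-α) * (α/(1-α)) = α := by field_simp
    nlinarith [mul_le_mul_of_nonneg_left h2 h1.le]
  have hb2 : -(α * Real.log α) ≤ 0.75 * Real.sqrt α := by
    have h5 : Real.log (1/Real.sqrt α) ≤ (1/Real.sqrt α)/Real.exp 1 :=
      log_le_div_e (by positivity)
    have h6 : Real.log (1/Real.sqrt α) = -(Real.log α)/2 := by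
      rw [one_div, Real.log_inv, Real.log_sqrt hα0.le]; ring
    rw [h6] at h5
    have h7 := mul_le_mul_of_nonneg_left h5 hs0.le
    have h9 : Real.sqrt α * ((1/Real.sqrt α)/Real.exp 1) = 1/Real.exp 1 := by
      field_simp
    rw [h9] at h7
    -- h7 : √α * (-(log α)/2) ≤ 1/e
    have he : (2.7:ℝ) ≤ Real.exp 1 := by
      have := Real.exp_one_gt_d9; norm_num at this ⊢; linarith
    have hepos : (0:ℝ) < Real.exp 1 := Real.exp_pos 1
    have h10 : (1:ℝ)/Real.exp 1 ≤ 0.375 := by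
      rw [div_le_iff₀ hepos]; nlinarith
    -- √α * (-(log α)) ≤ 0.75
    have h11 : Real.sqrt α * (-(Real.log α)) ≤ 0.75 := by linarith
    -- -(α log α) = √α * (√α * (-(log α))) ≤ √α * 0.75
    have h12 : -(α * Real.log α) = Real.sqrt α * (Real.sqrt α * (-(Real.log α))) := by
      linear_combination Real.log α * hs2
    rw [h12]
    calc Real.sqrt α * (Real.sqrt α * (-(Real.log α)))
        ≤ Real.sqrt α * 0.75 := by
          apply mul_le_mul_of_nonneg_left _ hs0.le
          nlinarith [Real.sqrt_nonneg α]
      _ = 0.75 * Real.sqrt α := by ring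
  have hsle : Real.sqrt α ≤ 0.75 := by nlinarith [Real.sqrt_nonneg α]
  nlinarith

private lemma entropy_nonneg (α : ℝ) (hα0 : 0 < α) (hα : α ≤ 1/2) :
    0 ≤ -((1-α) * Real.log (1-α)) - α * Real.log α := by
  have h1 : Real.log (1-α) ≤ 0 := Real.log_nonpos (by linarith) (by linarith)
  have h2 : Real.log α ≤ 0 := Real.log_nonpos hα0.le (by linarith)
  nlinarith

private lemma sum_choose_le (n m : ℕ) (β : ℝ) (hβ0 : 0 < β) (hβ : β ≤ 1/2)
    (hmn : m ≤ n) (hm : (m:ℝ) ≤ β * n) :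
    (∑ k ∈ Finset.range (m+1), (n.choose k : ℝ))
      ≤ Real.exp ((n:ℝ) * (-((1-β) * Real.log (1-β)) - β * Real.log β)) := by
  have h1 : 0 < 1 - β := by linarith
  set r : ℝ := β / (1-β) with hr
  have hr0 : 0 < r := by positivity
  have hr1 : r ≤ 1 := by rw [hr, div_le_one h1]; linarith
  set Q : ℝ := (1-β)^n * r ^ (β * (n:ℝ)) with hQdef
  have hQ : 0 < Q := by
    apply mul_pos (pow_pos h1 n) (Real.rpow_pos_of_pos hr0 _)
  have key1 : ∀ k ∈ Finset.range (m+1),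
      (n.choose k:ℝ) * Q ≤ (n.choose k:ℝ) * (β^k * (1-β)^(n-k)) := by
    intro k hk
    have hkm : k ≤ m := Nat.lt_succ_iff.1 (Finset.mem_range.1 hk)
    have hkn : k ≤ n := hkm.trans hmn
    have e1 : β^k * (1-β)^(n-k) = (1-β)^n * r^k := by
      rw [hr, div_pow, pow_sub₀ _ (ne_of_gt h1) hkn]
      field_simp
    have e2 : r ^ (β * (n:ℝ)) ≤ r ^ ((k:ℕ):ℝ) :=
      Real.rpow_le_rpow_of_exponent_ge hr0 hr1
        (le_trans (by exact_mod_cast hkm) hm)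
    rw [Real.rpow_natCast] at e2
    rw [e1]
    apply mul_le_mul_of_nonneg_left _ (Nat.cast_nonneg _)
    exact mul_le_mul_of_nonneg_left e2 (pow_nonneg h1.le n)
  have key2 : (∑ k ∈ Finset.range (m+1), (n.choose k:ℝ) * (β^k * (1-β)^(n-k))) ≤ 1 := by
    have hsub : Finset.range (m+1) ⊆ Finset.range (n+1) := by
      apply Finset.range_subset_range.2; omega
    have h2 : (∑ k ∈ Finset.range (m+1), (n.choose k:ℝ) * (β^k * (1-β)^(n-k)))
        ≤ ∑ k ∈ Finset.range (n+1), (n.choose k:ℝ) * (β^k * (1-β)^(n-k)) := by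
      apply Finset.sum_le_sum_of_subset_of_nonneg hsub
      intro k _ _
      positivity
    have h3 : (∑ k ∈ Finset.range (n+1), (n.choose k:ℝ) * (β^k * (1-β)^(n-k))) = 1 := by
      have := add_pow β (1-β) n
      have h4 : (β + (1-β)) = 1 := by ring
      rw [h4, one_pow] at this
      conv_rhs => rw [this]
      apply Finset.sum_congr rfl
      intro k _; ring
    linarith
  have key3 : (∑ k ∈ Finset.range (m+1), (n.choose k : ℝ)) * Q ≤ 1 := by
    rw [Finset.sum_mul]
    exact le_trans (Finset.sum_le_sum key1) key2
  have key4 : (∑ k ∈ Finset.range (m+1), (n.choose k : ℝ)) ≤ 1 / Q := by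
    rw [le_div_iff₀ hQ]; exact key3
  refine key4.trans (le_of_eq ?_)
  rw [hQdef]
  rw [show (1-β)^n = Real.exp ((n:ℝ) * Real.log (1-β)) by
        rw [Real.exp_nat_mul, Real.exp_log h1],
      Real.rpow_def_of_pos hr0, ← Real.exp_add, one_div, ← Real.exp_neg]
  congr 1
  rw [hr, Real.log_div (ne_of_gt hβ0) (ne_of_gt h1)]
  ring

private lemma final_bound (α ρ h : ℝ) (N₀ : ℕ) (hα0 : 0 < α) (hα1 : α < 1)
    (hρ0 : 0 < ρ) (hρ1 : ρ ≤ 1) (hh0 : 0 < h) (hh1 : h < 1)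
    (hN : N₀ = ⌈(ρ/4) * Real.log (1/h)⌉₊) (c : ℝ) (hc0 : 0 ≤ c)
    (hc2 : c ≤ 2 * Real.sqrt α) :
    Real.exp (((8*N₀ : ℕ):ℝ) * c) ≤ Real.exp 16 * h ^ (-(4 * Real.sqrt α)) := by
  have hlog : 0 < Real.log (1/h) := Real.log_pos ((one_lt_div hh0).2 hh1)
  have hs1 : Real.sqrt α ≤ 1 := by
    rw [show (1:ℝ) = Real.sqrt 1 from (Real.sqrt_one).symm]
    exact Real.sqrt_le_sqrt hα1.le
  have hceil : (N₀:ℝ) < (ρ/4) * Real.log (1/h) + 1 := by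
    rw [hN]; exact Nat.ceil_lt_add_one (by positivity)
  have hn : ((8*N₀:ℕ):ℝ) ≤ 2 * Real.log (1/h) + 8 := by
    push_cast
    nlinarith
  have hc2' : c ≤ 2 := by nlinarith
  have hexp : ((8*N₀:ℕ):ℝ) * c ≤ 4 * Real.sqrt α * Real.log (1/h) + 16 := by
    have := mul_le_mul_of_nonneg_right hn hc0
    nlinarith [mul_le_mul_of_nonneg_right hc2 hlog.le]
  calc Real.exp (((8*N₀:ℕ):ℝ) * c)
      ≤ Real.exp (4 * Real.sqrt α * Real.log (1/h) + 16) := Real.exp_le_exp.2 hexp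
    _ = Real.exp 16 * h ^ (-(4 * Real.sqrt α)) := by
        rw [Real.rpow_def_of_pos hh0, ← Real.exp_add]
        congr 1
        rw [show Real.log (1/h) = -Real.log h from by rw [one_div, Real.log_inv]]
        ring

private lemma card_le_sum_choose (n m : ℕ) (S : Set (Fin n → Bool))
    (hS : ∀ w ∈ S, (Finset.univ.filter (fun j => w j = true)).card ≤ m) :
    (Nat.card S : ℝ) ≤ ∑ k ∈ Finset.range (m+1), (n.choose k : ℝ) := by
  classical
  set F : Finset (Finset (Fin n)) :=
    (Finset.range (m+1)).biUnion (fun k => Finset.powersetCard k Finset.univ) with hF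
  have hmemF : ∀ w ∈ S, (Finset.univ.filter (fun j => w j = true)) ∈ F := by
    intro w hw
    apply Finset.mem_biUnion.2
    refine ⟨(Finset.univ.filter (fun j => w j = true)).card,
      Finset.mem_range.2 (Nat.lt_succ_of_le (hS w hw)), ?_⟩
    exact Finset.mem_powersetCard.2 ⟨Finset.subset_univ _, rfl⟩
  have hinj : Nat.card S ≤ Nat.card {A // A ∈ F} := by
    apply Nat.card_le_card_of_injective
      (fun w => (⟨Finset.univ.filter (fun j => w.1 j = true), hmemF w.1 w.2⟩ : {A // A ∈ F}))
    intro ⟨w, hw⟩ ⟨v, hv⟩ hEq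
    simp only [Subtype.mk.injEq] at hEq
    apply Subtype.ext
    funext j
    have hj := Finset.ext_iff.1 hEq j
    simp only [Finset.mem_filter, Finset.mem_univ, true_and] at hj
    revert hj; cases hw' : w j <;> cases hv' : v j <;> simp [hw', hv']
  have hFcard : (F.card : ℝ) ≤ ∑ k ∈ Finset.range (m+1), (n.choose k : ℝ) := by
    have := Finset.card_biUnion_le (s := Finset.range (m+1))
      (t := fun k => Finset.powersetCard k (Finset.univ : Finset (Fin n)))
    have h2 : ∀ k, (Finset.powersetCard k (Finset.univ : Finset (Fin n))).card = n.choose k := by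
      intro k
      rw [Finset.card_powersetCard, Finset.card_univ, Fintype.card_fin]
    calc (F.card : ℝ) ≤ ((∑ k ∈ Finset.range (m+1),
          (Finset.powersetCard k (Finset.univ : Finset (Fin n))).card : ℕ) : ℝ) := by
          exact_mod_cast this
      _ = _ := by push_cast; exact Finset.sum_congr rfl (fun k _ => by rw [h2])
  have : Nat.card {A // A ∈ F} = F.card := Nat.card_eq_finsetCard F
  calc (Nat.card S : ℝ) ≤ (F.card : ℝ) := by exact_mod_cast this ▸ hinj
    _ ≤ _ := hFcard

private lemma ones_lt (α : ℝ) (N₀ : ℕ) (hN₀ : 0 < N₀) (w : Fin (8*N₀) → Bool)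
    (hw : ∀ ℓ : Fin 8, ((Finset.univ.filter (fun j : Fin (8 * N₀) =>
              (ℓ : ℕ) * N₀ ≤ (j : ℕ) ∧ (j : ℕ) < ((ℓ : ℕ) + 1) * N₀ ∧
                w j = true)).card : ℝ) < α * N₀) :
    ((Finset.univ.filter (fun j => w j = true)).card : ℝ) < α * ((8*N₀:ℕ):ℝ) := by
  classical
  have hsub : Finset.univ.filter (fun j : Fin (8*N₀) => w j = true) ⊆
      Finset.univ.biUnion (fun ℓ : Fin 8 => Finset.univ.filter (fun j : Fin (8*N₀) =>
        (ℓ:ℕ)*N₀ ≤ (j:ℕ) ∧ (j:ℕ) < ((ℓ:ℕ)+1)*N₀ ∧ w j = true)) := by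
    intro j hj
    simp only [Finset.mem_filter, Finset.mem_univ, true_and] at hj
    have hjlt : (j:ℕ) < 8 * N₀ := j.2
    have hdiv : (j:ℕ)/N₀ < 8 := (Nat.div_lt_iff_lt_mul hN₀).2 (by omega)
    refine Finset.mem_biUnion.2 ⟨⟨(j:ℕ)/N₀, hdiv⟩, Finset.mem_univ _, ?_⟩
    simp only [Finset.mem_filter, Finset.mem_univ, true_and, Fin.val_mk]
    exact ⟨Nat.div_mul_le_self _ _,
      (Nat.div_lt_iff_lt_mul hN₀).1 (Nat.lt_succ_self _), hj⟩
  have h1 : (Finset.univ.filter (fun j : Fin (8*N₀) => w j = true)).card ≤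
      ∑ ℓ : Fin 8, (Finset.univ.filter (fun j : Fin (8*N₀) =>
        (ℓ:ℕ)*N₀ ≤ (j:ℕ) ∧ (j:ℕ) < ((ℓ:ℕ)+1)*N₀ ∧ w j = true)).card :=
    (Finset.card_le_card hsub).trans Finset.card_biUnion_le
  have h2 : (∑ ℓ : Fin 8, ((Finset.univ.filter (fun j : Fin (8*N₀) =>
        (ℓ:ℕ)*N₀ ≤ (j:ℕ) ∧ (j:ℕ) < ((ℓ:ℕ)+1)*N₀ ∧ w j = true)).card : ℝ))
      < ∑ _ℓ : Fin 8, α * (N₀:ℝ) :=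
    Finset.sum_lt_sum_of_nonempty Finset.univ_nonempty (fun ℓ _ => hw ℓ)
  have h3 : (∑ _ℓ : Fin 8, α * (N₀:ℝ)) = α * ((8*N₀:ℕ):ℝ) := by
    rw [Finset.sum_const, Finset.card_univ, Fintype.card_fin]
    push_cast; ring
  have h1' : ((Finset.univ.filter (fun j : Fin (8*N₀) => w j = true)).card : ℝ) ≤
      ∑ ℓ : Fin 8, ((Finset.univ.filter (fun j : Fin (8*N₀) =>
        (ℓ:ℕ)*N₀ ≤ (j:ℕ) ∧ (j:ℕ) < ((ℓ:ℕ)+1)*N₀ ∧ w j = true)).card : ℝ) := by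
    push_cast at h1 ⊢
    exact_mod_cast h1
  linarith


/-- **Counting words with low density of a given letter in all eight blocks**
(Lemma 3.2 of the paper).  Words of length `8 * N₀` over the alphabet `{1, 2}` are
encoded as functions `w : Fin (8 * N₀) → Bool`, with `w j = true` meaning that the
`j`-th letter equals `1`.  Here `N₀ = ⌈(ρ/4) log (1/h)⌉` and `X` is the set of words
such that every one of the eight consecutive blocks of length `N₀` contains strictly
fewer than `α N₀` letters equal to `1`.  Then `#X ≤ C h^{-4√α}` where `C > 0` depends
only on `α` (and not on `h` or `ρ`). -/
theorem count_uncontrolled_words (α : ℝ) (hα : α ∈ Set.Ioo (0:ℝ) 1) :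
    ∃ C > 0, ∀ ρ : ℝ, ρ ∈ Set.Ioc (0:ℝ) 1 → ∀ h : ℝ, h ∈ Set.Ioo (0:ℝ) 1 →
      ∀ N₀ : ℕ, N₀ = ⌈(ρ / 4) * Real.log (1 / h)⌉₊ →
        (Nat.card {w : Fin (8 * N₀) → Bool |
            ∀ ℓ : Fin 8, ((Finset.univ.filter (fun j : Fin (8 * N₀) =>
              (ℓ : ℕ) * N₀ ≤ (j : ℕ) ∧ (j : ℕ) < ((ℓ : ℕ) + 1) * N₀ ∧
                w j = true)).card : ℝ) < α * N₀} : ℝ)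
          ≤ C * h ^ (-(4 * Real.sqrt α)) := by

  obtain ⟨hα0, hα1⟩ := hα
  refine ⟨Real.exp 16, Real.exp_pos 16, ?_⟩
  rintro ρ ⟨hρ0, hρ1⟩ h ⟨hh0, hh1⟩ N₀ hN
  have hlog : 0 < Real.log (1/h) := Real.log_pos ((one_lt_div hh0).2 hh1)
  have hN₀pos : 0 < N₀ := by rw [hN]; exact Nat.ceil_pos.2 (by positivity)
  set S : Set (Fin (8*N₀) → Bool) := {w : Fin (8 * N₀) → Bool |
            ∀ ℓ : Fin 8, ((Finset.univ.filter (fun j : Fin (8 * N₀) =>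
              (ℓ : ℕ) * N₀ ≤ (j : ℕ) ∧ (j : ℕ) < ((ℓ : ℕ) + 1) * N₀ ∧
                w j = true)).card : ℝ) < α * N₀} with hSdef
  rcases le_or_gt α (1/2) with hhalf | hhalf
  · -- entropy case
    set m := ⌊α * ((8*N₀:ℕ):ℝ)⌋₊ with hm
    have hm_le : m ≤ 8*N₀ := by
      have h0 : α * ((8*N₀:ℕ):ℝ) ≤ ((8*N₀:ℕ):ℝ) := by
        nlinarith [show (0:ℝ) ≤ ((8*N₀:ℕ):ℝ) from Nat.cast_nonneg _]
      calc m ≤ ⌊((8*N₀:ℕ):ℝ)⌋₊ := Nat.floor_le_floor h0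
        _ = 8*N₀ := Nat.floor_natCast _
    have hmr : (m:ℝ) ≤ α * ((8*N₀:ℕ):ℝ) := Nat.floor_le (by positivity)
    have hcount : ∀ w ∈ S, (Finset.univ.filter (fun j => w j = true)).card ≤ m := by
      intro w hw
      exact Nat.le_floor (le_of_lt (ones_lt α N₀ hN₀pos w hw))
    have hb1 : (Nat.card S : ℝ) ≤ ∑ k ∈ Finset.range (m+1), ((8*N₀).choose k : ℝ) :=
      card_le_sum_choose (8*N₀) m S hcount
    have hb2 := sum_choose_le (8*N₀) m α hα0 hhalf hm_le hmr
    have hent := entropy_le α hα0 hhalf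
    have hent0 := entropy_nonneg α hα0 hhalf
    have hb3 : Real.exp (((8*N₀:ℕ):ℝ) * (-((1-α) * Real.log (1-α)) - α * Real.log α))
        ≤ Real.exp 16 * h ^ (-(4 * Real.sqrt α)) :=
      final_bound α ρ h N₀ hα0 hα1 hρ0 hρ1 hh0 hh1 hN _ hent0 hent
    calc (Nat.card S : ℝ) ≤ _ := hb1
      _ ≤ _ := hb2
      _ ≤ _ := hb3
  · -- trivial case
    have hcount : ∀ w ∈ S, (Finset.univ.filter (fun j => w j = true)).card ≤ 8*N₀ := by
      intro w _
      calc (Finset.univ.filter (fun j => w j = true)).card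
          ≤ (Finset.univ : Finset (Fin (8*N₀))).card := Finset.card_filter_le _ _
        _ = 8*N₀ := by rw [Finset.card_univ, Fintype.card_fin]
    have hb1 : (Nat.card S : ℝ) ≤ ∑ k ∈ Finset.range (8*N₀+1), ((8*N₀).choose k : ℝ) :=
      card_le_sum_choose (8*N₀) (8*N₀) S hcount
    have hb2 : (∑ k ∈ Finset.range (8*N₀+1), ((8*N₀).choose k : ℝ))
        = Real.exp (((8*N₀:ℕ):ℝ) * Real.log 2) := by
      have := Nat.sum_range_choose (8*N₀)
      have h2 : (∑ k ∈ Finset.range (8*N₀+1), ((8*N₀).choose k : ℝ)) = ((2:ℝ))^(8*N₀) := by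
        exact_mod_cast congrArg (Nat.cast : ℕ → ℝ) this
      rw [h2, Real.exp_nat_mul, Real.exp_log (by norm_num)]
    have hlog2_0 : (0:ℝ) ≤ Real.log 2 := Real.log_nonneg (by norm_num)
    have hs : (0.7:ℝ) ≤ Real.sqrt α := by
      nlinarith [Real.sq_sqrt hα0.le, Real.sqrt_nonneg α]
    have hlog2 : Real.log 2 ≤ 2 * Real.sqrt α := by
      have := Real.log_two_lt_d9
      nlinarith
    have hb3 : Real.exp (((8*N₀:ℕ):ℝ) * Real.log 2)
        ≤ Real.exp 16 * h ^ (-(4 * Real.sqrt α)) :=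
      final_bound α ρ h N₀ hα0 hα1 hρ0 hρ1 hh0 hh1 hN _ hlog2_0 hlog2
    calc (Nat.card S : ℝ) ≤ _ := hb1
      _ = _ := hb2
      _ ≤ _ := hb3
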